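/- If x ∈ Γ_k^n, then for every index j, the truncated vector x|j (with j-th coordinate set to 0, viewed as a point of ℝ^n) lies in Γ_{k-1}^n; equivalently, s_i(x|j) > 0 for i = 1,...,k-1. -/

import Mathlib

open Finset

/-- The `k`-th elementary symmetric polynomial of `x ∈ ℝⁿ`. -/
noncomputable def esymm (n k : ℕ) (x : Fin n → ℝ) : ℝ :=
  ∑ A ∈ Finset.powersetCard k (Finset.univ : Finset (Fin n)), ∏ i ∈ A, x i

/-- The Gårding cone `Γₖⁿ = {x : sₗ(x) > 0, l = 1,…,k}`. -/
def GammaK (n k : ℕ) (x : Fin n → ℝ) : Prop :=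
  ∀ l, 1 ≤ l → l ≤ k → 0 < esymm n l x

open Polynomial

namespace GammaAux

lemma esymm_cons (a : ℝ) (s : Multiset ℝ) (k : ℕ) :
    (a ::ₘ s).esymm (k + 1) = s.esymm (k + 1) + a * s.esymm k := by
  simp only [Multiset.esymm, Multiset.powersetCard_cons, Multiset.map_add, Multiset.sum_add,
    Multiset.map_map, Function.comp_def, Multiset.prod_cons]
  rw [Multiset.sum_map_mul_left]

lemma esymm_zero' (s : Multiset ℝ) : s.esymm 0 = 1 := by
  simp [Multiset.esymm]

lemma esymm_of_card_lt {s : Multiset ℝ} {k : ℕ} (h : Multiset.card s < k) : s.esymm k = 0 := by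
  simp [Multiset.esymm, Multiset.powersetCard_eq_empty k h]

lemma esymm_card (s : Multiset ℝ) : s.esymm (Multiset.card s) = s.prod := by
  induction s using Multiset.induction_on with
  | empty => simp [Multiset.esymm]
  | cons a t ih =>
      rw [Multiset.card_cons, esymm_cons, ih, Multiset.prod_cons,
        esymm_of_card_lt (Nat.lt_succ_self _)]
      ring

lemma esymm_pos {s : Multiset ℝ} {k : ℕ} (h : ∀ y ∈ s, 0 < y) (hk : k ≤ Multiset.card s) :
    0 < s.esymm k := by
  rw [Multiset.esymm]
  have hpos : ∀ x ∈ (s.powersetCard k).map Multiset.prod, 0 < x := by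
    intro x hx
    rcases Multiset.mem_map.1 hx with ⟨t, ht, rfl⟩
    have hts := (Multiset.mem_powersetCard.1 ht).1
    exact Multiset.prod_pos fun y hy => h y (Multiset.mem_of_le hts hy)
  have hne : (s.powersetCard k).map Multiset.prod ≠ 0 := by
    intro h0
    have := Multiset.card_powersetCard k s
    rw [Multiset.map_eq_zero.1 h0] at this
    simp only [Multiset.card_zero] at this
    exact absurd (Nat.choose_pos hk) (by omega)
  obtain ⟨a, ha⟩ := Multiset.exists_mem_of_ne_zero hne
  exact lt_of_lt_of_le (hpos a ha)
    (Multiset.single_le_sum (fun x hx => (hpos x hx).le) a ha)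


lemma esymm_one' (s : Multiset ℝ) : s.esymm 1 = s.sum := by
  simp [Multiset.esymm, Multiset.powersetCard_one, Multiset.map_map]

lemma prod_mul_esymm_inv (s : Multiset ℝ) (h0 : (0:ℝ) ∉ s) :
    ∀ i ≤ Multiset.card s,
      s.prod * ((s.map (·⁻¹)).esymm i) = s.esymm (Multiset.card s - i) := by
  induction s using Multiset.induction_on with
  | empty =>
      intro i hi
      simp only [Multiset.card_zero, Nat.le_zero] at hi
      subst hi; simp [esymm_zero']
  | cons a t ih =>
      intro i hi
      have ha : a ≠ 0 := fun h => h0 (h ▸ Multiset.mem_cons_self a t)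
      have h0t : (0:ℝ) ∉ t := fun h => h0 (Multiset.mem_cons_of_mem h)
      have hpt : t.prod ≠ 0 := Multiset.prod_ne_zero h0t
      rw [Multiset.card_cons] at hi
      rw [Multiset.map_cons, Multiset.prod_cons]
      rcases Nat.eq_zero_or_pos i with rfl | hipos
      · rw [esymm_zero', Nat.sub_zero, esymm_card, Multiset.prod_cons]
        ring
      · obtain ⟨j, rfl⟩ : ∃ j, i = j + 1 := ⟨i - 1, by omega⟩
        rw [esymm_cons]
        rcases eq_or_lt_of_le hi with heq | hlt
        · have hj : j = Multiset.card t := by omega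
          subst hj
          have hc : (Multiset.map (fun x => x⁻¹) t).esymm (Multiset.card t)
              = t.prod⁻¹ := by
            have := esymm_card (Multiset.map (fun x => x⁻¹) t)
            rw [Multiset.card_map] at this
            rw [this, show (Multiset.map (fun x => x⁻¹) t) = t.map Inv.inv from rfl,
              Multiset.prod_map_inv']
          have hz : Multiset.card (a ::ₘ t) - (Multiset.card t + 1) = 0 := by
            rw [Multiset.card_cons]; omega
          rw [esymm_of_card_lt (by simp), hc, hz, esymm_zero']
          field_simp
          ring
        · have hj1 : j + 1 ≤ Multiset.card t := by omega
          have e1 := ih h0t (j + 1) hj1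
          have e2 := ih h0t j (by omega)
          have hcc : Multiset.card (a ::ₘ t) - (j + 1)
              = (Multiset.card t - (j + 1)) + 1 := by
            rw [Multiset.card_cons]; omega
          rw [hcc, esymm_cons]
          have hcc2 : Multiset.card t - (j + 1) + 1 = Multiset.card t - j := by omega
          rw [hcc2]
          calc a * t.prod * ((t.map (·⁻¹)).esymm (j + 1) + a⁻¹ * (t.map (·⁻¹)).esymm j)
              = a * (t.prod * (t.map (·⁻¹)).esymm (j + 1))
                + (a * a⁻¹) * (t.prod * (t.map (·⁻¹)).esymm j) := by ring
            _ = a * t.esymm (Multiset.card t - (j + 1))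
                + t.esymm (Multiset.card t - j) := by
                  rw [e1, e2, mul_inv_cancel₀ ha, one_mul]
            _ = t.esymm (Multiset.card t - j) + a * t.esymm (Multiset.card t - (j + 1)) := by
                  ring
  
lemma two_mul_esymm_two (s : Multiset ℝ) :
    2 * s.esymm 2 = s.sum ^ 2 - (s.map (· ^ 2)).sum := by
  induction s using Multiset.induction_on with
  | empty => simp [esymm_of_card_lt]; exact esymm_of_card_lt (by simp)
  | cons a t ih =>
      have h2 := esymm_cons a t 1
      norm_num at h2
      rw [h2, Multiset.map_cons, Multiset.sum_cons, Multiset.sum_cons, esymm_one']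
      nlinarith [ih]


lemma newton_zero_aux : ∀ N : ℕ, ∀ s : Multiset ℝ, Multiset.card s ≤ N → ∀ r : ℕ,
    0 < s.esymm r → s.esymm (r + 1) = 0 → s.esymm (r + 2) ≤ 0 := by
  intro N
  induction N with
  | zero =>
      intro s hcard r _ _
      exact le_of_eq (esymm_of_card_lt (by omega))
  | succ N ih =>
      intro s hcard r h1 h2
      by_cases hlt : Multiset.card s < r + 2
      · exact le_of_eq (esymm_of_card_lt hlt)
      push_neg at hlt
      by_cases heq : Multiset.card s = r + 2
      · -- base case
        by_contra hpos
        push_neg at hpos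
        have hprod : 0 < s.prod := by
          rwa [show r + 2 = Multiset.card s from heq.symm, esymm_card] at hpos
        have h0s : (0:ℝ) ∉ s := by
          intro h
          rw [Multiset.prod_eq_zero h] at hprod
          exact lt_irrefl 0 hprod
        have e1 := prod_mul_esymm_inv s h0s 1 (by omega)
        have e2 := prod_mul_esymm_inv s h0s 2 (by omega)
        rw [show Multiset.card s - 1 = r + 1 from by omega, h2] at e1
        rw [show Multiset.card s - 2 = r from by omega] at e2
        have hS1 : (s.map (·⁻¹)).sum = 0 := by
          rw [← esymm_one']
          rcases mul_eq_zero.1 e1 with h | h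
          · exact absurd h (ne_of_gt hprod)
          · exact h
        have hS2 : 0 < (s.map (·⁻¹)).esymm 2 := by nlinarith [e2, hprod, h1]
        have hsq := two_mul_esymm_two (s.map (·⁻¹))
        rw [hS1] at hsq
        have hnn : 0 ≤ ((s.map (·⁻¹)).map (· ^ 2)).sum := by
          apply Multiset.sum_nonneg
          intro x hx
          rcases Multiset.mem_map.1 hx with ⟨y, _, rfl⟩
          positivity
        nlinarith [hsq, hS2, hnn]
      · -- inductive step via derivative
        set m := Multiset.card s with hmdef
        have hm : r + 2 < m := lt_of_le_of_ne hlt (Ne.symm heq)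
        have hm0 : (0:ℝ) < (m:ℝ) := Nat.cast_pos.2 (by omega)
        set P : Polynomial ℝ := (s.map fun a => X + C a).prod with hP
        have hmon : P.Monic :=
          monic_multiset_prod_of_monic s (fun a => X + C a) (fun a _ => monic_X_add_C a)
        have hdeg : P.natDegree = m := by
          rw [hP, natDegree_multiset_prod_of_monic _
            (fun f hf => by rcases Multiset.mem_map.1 hf with ⟨a, _, rfl⟩; exact monic_X_add_C a)]
          simp [Multiset.map_map, Function.comp_def, natDegree_X_add_C]
          rfl
        have hroots : P.roots = s.map Neg.neg := by
          have hPe : P = ((s.map Neg.neg).map fun a => X - C a).prod := by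
            rw [hP, Multiset.map_map]
            exact congrArg _ (Multiset.map_congr rfl fun a _ => by
              simp [Function.comp_apply, sub_neg_eq_add])
          rw [hPe, roots_multiset_prod_X_sub_C]
        have hcroots : Multiset.card P.roots = m := by rw [hroots, Multiset.card_map]
        set Q := derivative P with hQ
        have hQdeg_le : Q.natDegree ≤ m - 1 := hdeg ▸ natDegree_derivative_le P
        have hQroots_ge : m ≤ Multiset.card Q.roots + 1 := by
          have := Polynomial.card_roots_le_derivative P
          rwa [hcroots] at this
        have hQroots : Multiset.card Q.roots = m - 1 :=
          le_antisymm (le_trans (Polynomial.card_roots' Q) hQdeg_le) (by omega)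
        have hQdeg : Q.natDegree = m - 1 :=
          le_antisymm hQdeg_le (hQroots ▸ Polynomial.card_roots' Q)
        have hfac := Polynomial.C_leadingCoeff_mul_prod_multiset_X_sub_C
          (p := Q) (hQroots.trans hQdeg.symm)
        have hPcm : P.coeff m = 1 := by rw [← hdeg]; exact hmon.coeff_natDegree
        have hlc : Q.leadingCoeff = (m : ℝ) := by
          rw [Polynomial.leadingCoeff, hQdeg, hQ, Polynomial.coeff_derivative,
            show m - 1 + 1 = m from by omega, hPcm, one_mul]
          norm_cast
          omega
        set s' := Q.roots.map Neg.neg with hs'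
        have hcs' : Multiset.card s' = m - 1 := by rw [hs', Multiset.card_map, hQroots]
        have hQfac : Q = C (m:ℝ) * (s'.map fun a => X + C a).prod := by
          rw [← hfac, hlc]
          congr 1
          rw [hs', Multiset.map_map]
          apply congrArg Multiset.prod
          apply Multiset.map_congr rfl
          intro a _
          simp [Function.comp_apply, sub_eq_add_neg, map_neg]
        have key : ∀ i ≤ m - 1, (m:ℝ) * s'.esymm i = ((m - i : ℕ) : ℝ) * s.esymm i := by
          intro i hi
          have c1 : Q.coeff (m - 1 - i) = (m:ℝ) * s'.esymm i := by
            rw [hQfac, Polynomial.coeff_C_mul,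
              Multiset.prod_X_add_C_coeff s' (by rw [hcs']; omega), hcs',
              show m - 1 - (m - 1 - i) = i from by omega]
          have c2 : Q.coeff (m - 1 - i) = ((m - i : ℕ) : ℝ) * s.esymm i := by
            rw [hQ, Polynomial.coeff_derivative,
              show m - 1 - i + 1 = m - i from by omega,
              Multiset.prod_X_add_C_coeff s (by omega),
              show m - (m - i) = i from by omega]
            rw [show m - i = (m - 1 - i) + 1 from by omega]
            push_cast
            ring
          rw [← c1, c2]
        have k1 : 0 < s'.esymm r := by
          have hk := key r (by omega)
          have hmr : (0:ℝ) < ((m - r : ℕ) : ℝ) := Nat.cast_pos.2 (by omega)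
          nlinarith [hk, h1, hmr, hm0]
        have k2 : s'.esymm (r + 1) = 0 := by
          have hk := key (r + 1) (by omega)
          rw [h2, mul_zero] at hk
          rcases mul_eq_zero.1 hk with h | h
          · exact absurd h (ne_of_gt hm0)
          · exact h
        have k3 := ih s' (by omega) r k1 k2
        have hk := key (r + 2) (by omega)
        have hc2 : (0:ℝ) < ((m - (r + 2) : ℕ) : ℝ) := Nat.cast_pos.2 (by omega)
        nlinarith [hk, k3, hc2, hm0]

lemma newton_zero (s : Multiset ℝ) (r : ℕ) (h1 : 0 < s.esymm r)
    (h2 : s.esymm (r + 1) = 0) : s.esymm (r + 2) ≤ 0 :=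
  newton_zero_aux (Multiset.card s) s le_rfl r h1 h2


lemma esymm_shift (s : Multiset ℝ) (t : ℝ) {i : ℕ} (hi : i ≤ Multiset.card s) :
    (s.map (· + t)).esymm i = ∑ n ∈ Finset.range (i + 1),
      ((n + (Multiset.card s - i)).choose (Multiset.card s - i) : ℝ)
        * s.esymm (i - n) * t ^ n := by
  set m := Multiset.card s with hm
  set P : Polynomial ℝ := (s.map fun a => X + C a).prod with hP
  have hdeg : P.natDegree = m := by
    rw [hP, natDegree_multiset_prod_of_monic _
      (fun f hf => by rcases Multiset.mem_map.1 hf with ⟨a, _, rfl⟩; exact monic_X_add_C a)]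
    simp [Multiset.map_map, Function.comp_def, natDegree_X_add_C]
    rfl
  have hcard : Multiset.card (s.map (· + t)) = m := Multiset.card_map _ s
  have hcomp : ((s.map (· + t)).map fun a => X + C a).prod = P.comp (X + C t) := by
    rw [Polynomial.multiset_prod_comp, Multiset.map_map, Multiset.map_map]
    apply congrArg Multiset.prod
    apply Multiset.map_congr rfl
    intro a _
    simp only [Function.comp_apply, Polynomial.add_comp, Polynomial.X_comp,
      Polynomial.C_comp, map_add]
    ring
  have e0 : (s.map (· + t)).esymm i = (P.comp (X + C t)).coeff (m - i) := by
    rw [← hcomp]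
    rw [Multiset.prod_X_add_C_coeff _ (by rw [hcard]; omega), hcard,
      show m - (m - i) = i from by omega]
  rw [e0, ← Polynomial.taylor_apply, Polynomial.taylor_coeff]
  have hHdeg : (Polynomial.hasseDeriv (m - i) P).natDegree < i + 1 := by
    have := Polynomial.natDegree_hasseDeriv_le P (m - i)
    omega
  rw [Polynomial.eval_eq_sum_range' hHdeg]
  apply Finset.sum_congr rfl
  intro n hn
  rw [Finset.mem_range] at hn
  rw [Polynomial.hasseDeriv_coeff, Multiset.prod_X_add_C_coeff s (by omega),
    show m - (n + (m - i)) = i - n from by omega]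

lemma esymm_shift_pos (s : Multiset ℝ) {t : ℝ} (ht : 0 ≤ t) {k i : ℕ}
    (hpos : ∀ j, 1 ≤ j → j ≤ k → 0 < s.esymm j) (h1 : 1 ≤ i) (hik : i ≤ k)
    (hi : i ≤ Multiset.card s) : 0 < (s.map (· + t)).esymm i := by
  rw [esymm_shift s t hi]
  apply Finset.sum_pos'
  · intro n hn
    rw [Finset.mem_range] at hn
    apply mul_nonneg (mul_nonneg (Nat.cast_nonneg _) _) (pow_nonneg ht n)
    rcases Nat.eq_zero_or_pos (i - n) with h | h
    · rw [h, esymm_zero']; norm_num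
    · exact (hpos (i - n) h (by omega)).le
  · refine ⟨0, Finset.mem_range.2 (by omega), ?_⟩
    rw [zero_add, Nat.choose_self, Nat.sub_zero, pow_zero, Nat.cast_one, one_mul, mul_one]
    exact hpos i h1 hik

lemma continuous_shift (s : Multiset ℝ) {i : ℕ} (hi : i ≤ Multiset.card s) :
    Continuous fun t : ℝ => (s.map (· + t)).esymm i := by
  have hfe : (fun t : ℝ => (s.map (· + t)).esymm i) = fun t =>
      ∑ n ∈ Finset.range (i + 1),
        ((n + (Multiset.card s - i)).choose (Multiset.card s - i) : ℝ)
          * s.esymm (i - n) * t ^ n := funext fun t => esymm_shift s t hi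
  rw [hfe]
  exact continuous_finset_sum _ fun n _ => continuous_const.mul (continuous_pow n)


lemma main_multiset : ∀ (k : ℕ) (T : Multiset ℝ) (a : ℝ),
    (∀ i, 1 ≤ i → i ≤ k → 0 < T.esymm i + a * T.esymm (i - 1)) →
    ∀ l, 1 ≤ l → l + 1 ≤ k → 0 < T.esymm l := by
  intro k
  induction k with
  | zero => intro T a _ l _ hl; omega
  | succ k ih =>
      intro T a H l hl1 hl2
      by_cases hlk : l + 1 ≤ k
      · exact ih T a (fun i h1 h2 => H i h1 (by omega)) l hl1 hlk
      have hlk' : l = k := by omega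
      subst hlk'
      have hlow : ∀ i, 1 ≤ i → i + 1 ≤ l → 0 < T.esymm i :=
        fun i h1 h2 => ih T a (fun i h1 h2 => H i h1 (by omega)) i h1 h2
      have hcardT : l ≤ Multiset.card T := by
        by_contra hc
        push_neg at hc
        have h := H (l + 1) (by omega) le_rfl
        rw [esymm_of_card_lt (by omega), show l + 1 - 1 = l from by omega,
          esymm_of_card_lt (by omega)] at h
        simp at h
      have hs_esymm : ∀ i, 1 ≤ i → i ≤ l + 1 → 0 < (a ::ₘ T).esymm i := by
        intro i h1 h2
        obtain ⟨p, rfl⟩ : ∃ p, i = p + 1 := ⟨i - 1, by omega⟩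
        rw [esymm_cons]
        have h := H (p + 1) h1 h2
        rw [show p + 1 - 1 = p from by omega] at h
        exact h
      by_contra hneg
      push_neg at hneg
      set M : ℝ := (T.map abs).sum + 1 with hM
      have habs_nonneg : ∀ x ∈ T.map abs, (0:ℝ) ≤ x := by
        intro x hx
        rcases Multiset.mem_map.1 hx with ⟨y, _, rfl⟩
        exact abs_nonneg y
      have hM0 : 0 ≤ (T.map abs).sum := Multiset.sum_nonneg habs_nonneg
      have hMpos : (0:ℝ) ≤ M := by rw [hM]; linarith
      have hTpos : ∀ y ∈ T.map (· + M), 0 < y := by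
        intro y hy
        rcases Multiset.mem_map.1 hy with ⟨z, hz, rfl⟩
        have habs : |z| ≤ (T.map abs).sum :=
          Multiset.single_le_sum habs_nonneg _ (Multiset.mem_map_of_mem abs hz)
        have h2 := (abs_le.1 habs).1
        rw [hM]; linarith
      have hfM : 0 < (T.map (· + M)).esymm l :=
        esymm_pos hTpos (by rwa [Multiset.card_map])
      have hf0 : (T.map (· + (0:ℝ))).esymm l ≤ 0 := by
        have he : T.map (· + (0:ℝ)) = T := by simp
        rw [he]; exact hneg
      have hcont : ContinuousOn (fun t : ℝ => (T.map (· + t)).esymm l) (Set.Icc 0 M) :=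
        (continuous_shift T hcardT).continuousOn
      have hmem : (0:ℝ) ∈ Set.Icc ((T.map (· + (0:ℝ))).esymm l) ((T.map (· + M)).esymm l) :=
        ⟨hf0, hfM.le⟩
      obtain ⟨t₀, ht₀mem, ht₀⟩ := intermediate_value_Icc hMpos hcont hmem
      have ht0 : (0:ℝ) ≤ t₀ := ht₀mem.1
      have hU1 : (T.map (· + t₀)).esymm l = 0 := ht₀
      have hU2 : 0 < (T.map (· + t₀)).esymm (l - 1) := by
        rcases Nat.eq_zero_or_pos (l - 1) with h | h
        · rw [h, esymm_zero']; norm_num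
        · exact esymm_shift_pos T ht0 (k := l - 1)
            (fun j a b => hlow j a (by omega)) h le_rfl (by omega)
      have hU3 : 0 < (T.map (· + t₀)).esymm (l + 1) := by
        have hs_shift : 0 < ((a ::ₘ T).map (· + t₀)).esymm (l + 1) :=
          esymm_shift_pos (a ::ₘ T) ht0 hs_esymm (by omega) le_rfl
            (by rw [Multiset.card_cons]; omega)
        rw [Multiset.map_cons, esymm_cons, hU1, mul_zero, add_zero] at hs_shift
        exact hs_shift
      have hnz := newton_zero (T.map (· + t₀)) (l - 1) hU2
        (by rw [show l - 1 + 1 = l from by omega]; exact hU1)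
      rw [show l - 1 + 2 = l + 1 from by omega] at hnz
      linarith

end GammaAux

/-- If x ∈ Γₖⁿ then x|j ∈ Γ_{k-1}ⁿ. -/
theorem update_mem_GammaK (n k : ℕ) (x : Fin n → ℝ) (hx : GammaK n k x) (j : Fin n) :
    GammaK n (k - 1) (Function.update x j 0) := by
  intro l hl1 hl2
  have hsplit : (Finset.univ : Finset (Fin n)).val
      = j ::ₘ (Finset.univ.erase j).val := by
    rw [Finset.erase_val]
    exact (Multiset.cons_erase (Finset.mem_def.1 (Finset.mem_univ j))).symm
  have bridge : ∀ (g : Fin n → ℝ) (i : ℕ),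
      esymm n i g = ((Finset.univ : Finset (Fin n)).val.map g).esymm i := by
    intro g i
    rw [Finset.esymm_map_val]
    rfl
  set T : Multiset ℝ := (Finset.univ.erase j).val.map x with hT
  have hmapx : (Finset.univ : Finset (Fin n)).val.map x = x j ::ₘ T := by
    rw [hsplit, Multiset.map_cons]
  have hmapu : (Finset.univ : Finset (Fin n)).val.map (Function.update x j 0)
      = 0 ::ₘ T := by
    rw [hsplit, Multiset.map_cons, Function.update_self]
    congr 1
    apply Multiset.map_congr rfl
    intro i hi
    exact Function.update_of_ne (Finset.ne_of_mem_erase (Finset.mem_def.2 hi)) 0 x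
  have hH : ∀ i, 1 ≤ i → i ≤ k → 0 < T.esymm i + x j * T.esymm (i - 1) := by
    intro i h1 h2
    have h := hx i h1 h2
    rw [bridge x i, hmapx] at h
    obtain ⟨p, rfl⟩ : ∃ p, i = p + 1 := ⟨i - 1, by omega⟩
    rw [GammaAux.esymm_cons] at h
    rw [show p + 1 - 1 = p from by omega]
    exact h
  have hml := GammaAux.main_multiset k T (x j) hH l hl1 (by omega)
  rw [bridge _ l, hmapu]
  obtain ⟨p, rfl⟩ : ∃ p, l = p + 1 := ⟨l - 1, by omega⟩
  rw [GammaAux.esymm_cons, zero_mul, add_zero]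
  exact hml
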